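/- arXiv:1301.5192 — 4 statements merged into one kernel-verified Lean document; each statement's English description precedes it below -/
import Mathlib

section
/- If Ai satisfies the Airy equation and μ is a zero of Ai with suitable decay of Ai at +∞, then ∫_μ^∞ Ai(x)² dx = Ai'(μ)². -/
open MeasureTheory Filter

/-- If `Ai` satisfies the Airy equation and `μ` is a zero of `Ai`, with suitable decay
of `Ai` at `+∞`, then `∫_μ^∞ Ai² = Ai'(μ)²`. -/
theorem airy_integral_at_zero (Ai : ℝ → ℝ)
    (hAi : ∀ x, HasDerivAt Ai (deriv Ai x) x)
    (hAi'' : ∀ x, HasDerivAt (deriv Ai) (x * Ai x) x)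
    (μ : ℝ) (hμ : Ai μ = 0)
    (hdecay1 : Tendsto (fun x => x * Ai x ^ 2) atTop (nhds 0))
    (hdecay2 : Tendsto (fun x => (deriv Ai x) ^ 2) atTop (nhds 0))
    (hint : IntegrableOn (fun x => Ai x ^ 2) (Set.Ici μ)) :
    ∫ x in Set.Ioi μ, Ai x ^ 2 = (deriv Ai μ) ^ 2 := by
  have key : ∀ x ∈ Set.Ici μ,
      HasDerivAt (fun x => (deriv Ai x) ^ 2 - x * Ai x ^ 2) (-(Ai x ^ 2)) x := by
    intro x _
    have h1 : HasDerivAt (fun x => (deriv Ai x) ^ 2) (2 * deriv Ai x * (x * Ai x)) x :=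
      (hAi'' x).pow 2 |>.congr_deriv (by ring)
    have h2 : HasDerivAt (fun x => x * Ai x ^ 2)
        (1 * Ai x ^ 2 + x * (2 * Ai x * deriv Ai x)) x :=
      (hasDerivAt_id x).mul (((hAi x).pow 2).congr_deriv (by ring))
    have := h1.sub h2
    refine this.congr_deriv ?_
    ring
  have hmain := MeasureTheory.integral_Ioi_of_hasDerivAt_of_tendsto' key
    ((hint.mono_set Set.Ioi_subset_Ici_self).neg)
    (m := 0) ?_
  · have : ∫ x in Set.Ioi μ, -(Ai x ^ 2) = -(∫ x in Set.Ioi μ, Ai x ^ 2) := by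
      exact integral_neg _
    rw [this] at hmain
    have : (0 : ℝ) - ((deriv Ai μ) ^ 2 - μ * Ai μ ^ 2) = -((deriv Ai μ) ^ 2) := by
      rw [hμ]; ring
    rw [this] at hmain
    linarith
  · have := hdecay2.sub hdecay1
    simpa using this
end

section
/- For every θ with 0 < |θ| < 3π/4, the quantity m_θ = sqrt(1 + sin²(2θ/3)/sin²θ − 2·cos(θ/3)·sin(2θ/3)/sin θ) is well-defined and strictly positive, i.e., the expression under the square root is strictly positive. -/
open Real

lemma sin_ne_zero_of_abs (x : ℝ) (h1 : 0 < |x|) (h2 : |x| < π) : Real.sin x ≠ 0 := by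
  have hs : 0 < Real.sin |x| := Real.sin_pos_of_pos_of_lt_pi h1 h2
  rcases abs_cases x with ⟨h, _⟩ | ⟨h, _⟩
  · rw [h] at hs; exact ne_of_gt hs
  · rw [h, Real.sin_neg] at hs; exact ne_of_lt (by linarith)

/-- For `0 < |θ| < 3π/4`, the expression under the square root defining `m_θ`
is strictly positive. -/
theorem m_theta_pos (θ : ℝ) (h1 : 0 < |θ|) (h2 : |θ| < 3 * π / 4) :
    0 < 1 + sin (2 * θ / 3) ^ 2 / sin θ ^ 2 -
        2 * cos (θ / 3) * sin (2 * θ / 3) / sin θ := by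
  have hπ : 0 < π := Real.pi_pos
  have hs : Real.sin θ ≠ 0 := sin_ne_zero_of_abs θ h1 (by linarith)
  have h3 : Real.sin (θ / 3) ≠ 0 := by
    apply sin_ne_zero_of_abs
    · rw [abs_div]; positivity
    · rw [abs_div]
      have : |(3 : ℝ)| = 3 := by norm_num
      rw [this]; linarith
  have h23 : Real.sin (2 * θ / 3) ≠ 0 := by
    apply sin_ne_zero_of_abs
    · rw [abs_div, abs_mul]
      have : |(2 : ℝ)| = 2 := by norm_num
      rw [this]
      have : |(3 : ℝ)| = 3 := by norm_num
      rw [this]; positivity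
    · rw [abs_div, abs_mul]
      have h2' : |(2 : ℝ)| = 2 := by norm_num
      have h3' : |(3 : ℝ)| = 3 := by norm_num
      rw [h2', h3']; linarith
  have key : 1 + sin (2 * θ / 3) ^ 2 / sin θ ^ 2 -
        2 * cos (θ / 3) * sin (2 * θ / 3) / sin θ =
      (1 - cos (θ / 3) * sin (2 * θ / 3) / sin θ) ^ 2 +
      (sin (2 * θ / 3) * sin (θ / 3) / sin θ) ^ 2 := by
    have hpyth : Real.sin (θ / 3) ^ 2 = 1 - Real.cos (θ / 3) ^ 2 := by
      have := Real.sin_sq_add_cos_sq (θ / 3); linarith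
    field_simp
    linear_combination (-(Real.sin (2 * θ / 3) ^ 2)) * hpyth
  rw [key]
  have ht : sin (2 * θ / 3) * sin (θ / 3) / sin θ ≠ 0 := by
    apply div_ne_zero (mul_ne_zero h23 h3) hs
  have := sq_nonneg (1 - cos (θ / 3) * sin (2 * θ / 3) / sin θ)
  have h2pos : 0 < (sin (2 * θ / 3) * sin (θ / 3) / sin θ) ^ 2 := by positivity
  linarith
end

section
/- Define f(z) = log(z + sqrt(z² − 1)) − z·sqrt(z² − 1) for complex z (with principal branches). For 0 < θ < π, the real number c(θ) := 2·Re f(e^{iθ/4}/sqrt(2·cos(θ/2))) is strictly positive. -/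
open Real

/-- `f(z) = log(z + √(z²−1)) − z√(z²−1)` (principal branches). -/
noncomputable def daviesKuijlaarsF (z : ℂ) : ℂ :=
  Complex.log (z + (z ^ 2 - 1) ^ ((1 : ℂ) / 2)) - z * (z ^ 2 - 1) ^ ((1 : ℂ) / 2)

private lemma dk_aux (x y u r : ℝ) (hxy : x^2 + y^2 = 1) (hx : 0 < x) (hy : 0 < y)
    (hu : u = x^2 - y^2) (hr : r^2 = 2) : 2*u < ((x+y)*r)^2 := by
  nlinarith [mul_pos hx hy, sq_nonneg y]

/-- For `0 < θ < π`, the Davies–Kuijlaars growth rate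
`c(θ) = 2 Re f(e^{iθ/4}/√(2cos(θ/2)))` is strictly positive. -/
theorem davies_kuijlaars_rate_pos (θ : ℝ) (h1 : 0 < θ) (h2 : θ < π) :
    0 < 2 * (daviesKuijlaarsF
      (Complex.exp (Complex.I * (θ / 4)) / (Real.sqrt (2 * Real.cos (θ / 2)) : ℂ))).re := by
  have hπ : (0:ℝ) < π := Real.pi_pos
  set a := Real.cos (θ/4) with ha_def
  set b := Real.sin (θ/4) with hb_def
  set c := Real.cos (θ/2) with hc_def
  set d := Real.sin (θ/2) with hd_def
  have hc : 0 < c := Real.cos_pos_of_mem_Ioo ⟨by linarith, by linarith⟩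
  have ha : 0 < a := Real.cos_pos_of_mem_Ioo ⟨by linarith, by linarith⟩
  have hb : 0 < b := Real.sin_pos_of_pos_of_lt_pi (by linarith) (by linarith)
  have hd : 0 < d := Real.sin_pos_of_pos_of_lt_pi (by linarith) (by linarith)
  have hab : a^2 + b^2 = 1 := by
    rw [ha_def, hb_def, add_comm]; exact Real.sin_sq_add_cos_sq _
  have hcab : c = a^2 - b^2 := by
    rw [hc_def, ha_def, hb_def, show θ/2 = 2*(θ/4) by ring, Real.cos_two_mul]
    nlinarith [hab]
  have hdab : d = 2*a*b := by
    rw [hd_def, ha_def, hb_def, show θ/2 = 2*(θ/4) by ring, Real.sin_two_mul]; ring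
  set s := Real.sqrt (2*c) with hs_def
  have hs : 0 < s := Real.sqrt_pos.2 (by linarith)
  have hs2 : s^2 = 2*c := Real.sq_sqrt (by linarith)
  have hsC : (s:ℂ) ≠ 0 := by exact_mod_cast hs.ne'
  have hcC : (c:ℂ) ≠ 0 := by exact_mod_cast hc.ne'
  set z : ℂ := Complex.exp (Complex.I * (θ / 4)) / (s : ℂ) with hz_def
  -- z in cartesian form
  have hz : z = ((a:ℂ) + (b:ℂ)*Complex.I) / (s:ℂ) := by
    have hIt : Complex.I * ((θ:ℂ)/4) = ((θ/4 : ℝ):ℂ) * Complex.I := by push_cast; ring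
    rw [hz_def, hIt, Complex.exp_mul_I, ha_def, hb_def, Complex.ofReal_cos, Complex.ofReal_sin]
  -- z² − 1
  have hw : z^2 - 1 = ((-c : ℝ) + (d:ℝ)*Complex.I) / ((2*c : ℝ):ℂ) := by
    rw [hz]
    have h2c : ((2*c:ℝ):ℂ) ≠ 0 := by exact_mod_cast (by linarith : (2*c:ℝ) ≠ 0)
    have hsc : ((s:ℂ))^2 = ((2*c:ℝ):ℂ) := by exact_mod_cast congrArg (Complex.ofReal ·) hs2
    field_simp
    rw [hsc]
    have : ((a:ℂ) + (b:ℂ)*Complex.I)^2 = ((a^2 - b^2 : ℝ):ℂ) + ((2*a*b:ℝ):ℂ)*Complex.I := by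
      push_cast
      ring_nf
      rw [Complex.I_sq]
      ring
    rw [this, ← hcab, ← hdab]
    push_cast
    field_simp
    ring
  -- z² − 1 as a complex exponential
  set u : ℂ := ((2 * Real.log s⁻¹ : ℝ) : ℂ) + ((π - θ/2 : ℝ):ℂ) * Complex.I with hu_def
  have hsinv : Real.exp (Real.log s⁻¹) = s⁻¹ := Real.exp_log (inv_pos.2 hs)
  have hwu : z^2 - 1 = Complex.exp u := by
    rw [hu_def, Complex.exp_add, Complex.exp_mul_I]
    rw [← Complex.ofReal_exp, ← Complex.ofReal_cos, ← Complex.ofReal_sin]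
    rw [Real.cos_pi_sub, Real.sin_pi_sub]
    have : Real.exp (2 * Real.log s⁻¹) = (2*c)⁻¹ := by
      rw [two_mul, Real.exp_add, hsinv, ← hs2]
      field_simp
    rw [this, hw]
    simp only [Complex.ofReal_inv, Complex.ofReal_mul, Complex.ofReal_neg, Complex.ofReal_ofNat]
    rw [div_eq_inv_mul]
  -- the principal square root
  have hsqrt : (z^2 - 1) ^ ((1:ℂ)/2) = ((b:ℂ) + (a:ℂ)*Complex.I) / (s:ℂ) := by
    have hne : z^2 - 1 ≠ 0 := by rw [hwu]; exact Complex.exp_ne_zero u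
    rw [Complex.cpow_def_of_ne_zero hne, hwu]
    have him1 : -π < u.im := by
      simp only [hu_def, Complex.add_im, Complex.ofReal_im, Complex.mul_im, Complex.I_im,
        Complex.ofReal_re, Complex.I_re]
      simp
      linarith
    have him2 : u.im ≤ π := by
      simp only [hu_def, Complex.add_im, Complex.ofReal_im, Complex.mul_im, Complex.I_im,
        Complex.ofReal_re, Complex.I_re]
      simp
      linarith
    rw [Complex.log_exp him1 him2]
    have hu2 : u * (1/2) = ((Real.log s⁻¹ : ℝ):ℂ) + ((π/2 - θ/4 : ℝ):ℂ) * Complex.I := by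
      rw [hu_def]; push_cast; ring
    rw [hu2, Complex.exp_add, Complex.exp_mul_I, ← Complex.ofReal_exp, hsinv,
      ← Complex.ofReal_cos, ← Complex.ofReal_sin, Real.cos_pi_div_two_sub,
      Real.sin_pi_div_two_sub]
    simp only [← ha_def, ← hb_def, Complex.ofReal_inv]
    field_simp
  -- z·√(z²−1) is purely imaginary
  have hprod : z * (z^2 - 1) ^ ((1:ℂ)/2) = (((2*c)⁻¹ : ℝ):ℂ) * Complex.I := by
    rw [hsqrt, hz]
    have hsc : ((s:ℂ))^2 = ((2*c:ℝ):ℂ) := by exact_mod_cast congrArg (Complex.ofReal ·) hs2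
    have h2c : ((2*c:ℝ):ℂ) ≠ 0 := by exact_mod_cast (by linarith : (2*c:ℝ) ≠ 0)
    have habC : ((a:ℂ) + (b:ℂ)*Complex.I) * ((b:ℂ) + (a:ℂ)*Complex.I) = Complex.I := by
      have : ((a:ℂ) + (b:ℂ)*Complex.I) * ((b:ℂ) + (a:ℂ)*Complex.I)
          = ((a*b + a*b*(-1) : ℝ):ℂ) + ((a^2+b^2 : ℝ):ℂ) * Complex.I := by
        push_cast; ring_nf; rw [Complex.I_sq]; ring
      rw [this, hab]; push_cast; ring
    rw [div_mul_div_comm, habC, ← sq, hsc]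
    push_cast
    field_simp
  have hprod_re : (z * (z^2 - 1) ^ ((1:ℂ)/2)).re = 0 := by
    rw [hprod]; simp
  -- z + √(z²−1)
  have hsum : z + (z^2 - 1) ^ ((1:ℂ)/2) = (((a+b)/s : ℝ):ℂ) * (1 + Complex.I) := by
    rw [hsqrt, hz]
    push_cast
    field_simp
    ring
  have habs : ‖z + (z^2 - 1) ^ ((1:ℂ)/2)‖ = (a+b)/s * Real.sqrt 2 := by
    rw [hsum, norm_mul, Complex.norm_real, Real.norm_eq_abs, abs_of_pos (by positivity)]
    congr 1
    rw [Complex.norm_def, Complex.normSq_apply]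
    norm_num
  have hre : (daviesKuijlaarsF z).re = Real.log ((a+b)/s * Real.sqrt 2) := by
    rw [daviesKuijlaarsF, Complex.sub_re, Complex.log_re, habs, hprod_re, sub_zero]
  rw [hre]
  have hkey : 1 < (a+b)/s * Real.sqrt 2 := by
    have h2 : (Real.sqrt 2)^2 = 2 := Real.sq_sqrt (by norm_num)
    have hslt : s < (a+b) * Real.sqrt 2 := by
      rw [hs_def, Real.sqrt_lt' (by positivity)]
      exact dk_aux a b c (Real.sqrt 2) hab ha hb hcab h2
    rw [div_mul_eq_mul_div, lt_div_iff₀ hs, one_mul]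
    exact hslt
  have := Real.log_pos hkey
  linarith
end

section
/- Let A ∈ B(H) and ξ ∉ σ(A) with ‖(A − ξ)^{-1}‖ > 1/ε. Then there exists B ∈ B(H) with ‖B‖ ≤ 1 such that ξ ∈ σ(A + εB). Conversely, if ξ ∈ σ(A + εB) for some ‖B‖ ≤ 1 and ξ ∉ σ(A), then ‖(A − ξ)^{-1}‖ ≥ 1/ε. -/
open ContinuousLinearMap in
/-- Weak Roch–Silbermann theorem: for `ξ ∉ σ(A)`, one has
`‖(A − ξ)⁻¹‖ > 1/ε` iff (up to the boundary case) `ξ ∈ σ(A + εB)` for some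
`‖B‖ ≤ 1`. -/
theorem roch_silbermann {H : Type*} [NormedAddCommGroup H]
    [InnerProductSpace ℂ H] [CompleteSpace H]
    (A : H →L[ℂ] H) (ε : ℝ) (hε : 0 < ε) (ξ : ℂ) (hξ : ξ ∉ spectrum ℂ A) :
    (1 / ε < ‖resolvent A ξ‖ →
      ∃ B : H →L[ℂ] H, ‖B‖ ≤ 1 ∧ ξ ∈ spectrum ℂ (A + (ε : ℂ) • B)) ∧
    ((∃ B : H →L[ℂ] H, ‖B‖ ≤ 1 ∧ ξ ∈ spectrum ℂ (A + (ε : ℂ) • B)) →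
      1 / ε ≤ ‖resolvent A ξ‖) := by
  have hunit : IsUnit (algebraMap ℂ (H →L[ℂ] H) ξ - A) := spectrum.notMem_iff.mp hξ
  set R : H →L[ℂ] H := resolvent A ξ with hR
  have hmul : (algebraMap ℂ (H →L[ℂ] H) ξ - A) * R = 1 :=
    Ring.mul_inverse_cancel _ hunit
  constructor
  · intro hlt
    obtain ⟨x, hx1, hx2⟩ := R.exists_lt_apply_of_lt_opNorm hlt
    set y := R x with hy
    have hy0 : (0:ℝ) < 1/ε := by positivity
    have hyn : 1/ε < ‖y‖ := hx2
    have hyne : y ≠ 0 := by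
      intro h; rw [h] at hyn; simp at hyn; linarith
    have hynpos : (0:ℝ) < ‖y‖ := lt_trans hy0 hyn
    set r : ℂ := ((ε : ℂ) * (‖y‖:ℂ)^2)⁻¹ with hr'
    set B : H →L[ℂ] H := r • ((innerSL ℂ y).smulRight x) with hB
    have hεy : (1:ℝ) < ε * ‖y‖ := by
      rw [div_lt_iff₀ hε] at hyn
      nlinarith
    have hBy : ((ε : ℂ) • B) y = x := by
      rw [ContinuousLinearMap.smul_apply, hB]
      simp only [coe_smul', Pi.smul_apply, smulRight_apply, innerSL_apply_apply]
      have hin : (inner ℂ y y : ℂ) = (‖y‖:ℂ)^2 := by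
        rw [inner_self_eq_norm_sq_to_K]; rfl
      rw [hin, smul_smul, smul_smul, hr']
      have hone : (ε:ℂ) * ((ε:ℂ) * (‖y‖:ℂ)^2)⁻¹ * (‖y‖:ℂ)^2 = 1 := by
        have h1 : (ε:ℂ) ≠ 0 := by exact_mod_cast hε.ne'
        have h2 : (‖y‖:ℂ) ≠ 0 := by exact_mod_cast hynpos.ne'
        field_simp
      rw [hone, one_smul]
    have hBnorm : ‖B‖ ≤ 1 := by
      rw [hB]
      have hnB : ‖r • ((innerSL ℂ y).smulRight x)‖ = ‖r‖ * (‖y‖ * ‖x‖) := by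
        rw [norm_smul, norm_smulRight_apply, innerSL_apply_norm]
      rw [hnB]
      have hrn : ‖r‖ = (ε * ‖y‖^2)⁻¹ := by
        rw [hr', norm_inv, norm_mul, norm_pow, Complex.norm_real, Complex.norm_real,
          Real.norm_eq_abs, Real.norm_eq_abs, abs_of_pos hε, abs_of_pos hynpos]
      rw [hrn]
      have h1 : (ε * ‖y‖ ^ 2)⁻¹ * (‖y‖ * ‖x‖) = ‖x‖ / (ε * ‖y‖) := by
        field_simp
      rw [h1, div_le_one (by linarith)]
      linarith
    refine ⟨B, hBnorm, ?_⟩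
    rw [spectrum.mem_iff]
    intro hu
    obtain ⟨u, hu'⟩ := hu
    have hAy : (algebraMap ℂ (H →L[ℂ] H) ξ) y - A y = x := by
      have h := congrArg (fun T : H →L[ℂ] H => T x) hmul
      simpa [ContinuousLinearMap.mul_apply, ContinuousLinearMap.sub_apply] using h
    have hker : (algebraMap ℂ (H →L[ℂ] H) ξ - (A + (ε:ℂ) • B)) y = 0 := by
      simp only [ContinuousLinearMap.sub_apply, ContinuousLinearMap.add_apply]
      rw [sub_add_eq_sub_sub, hAy, hBy, sub_self]
    have h2 : ((u⁻¹ : (H →L[ℂ] H)ˣ) : H →L[ℂ] H) ((u : H →L[ℂ] H) y) = y := by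
      rw [← ContinuousLinearMap.mul_apply, ← Units.val_mul, inv_mul_cancel, Units.val_one,
        ContinuousLinearMap.one_apply]
    rw [hu', hker] at h2
    simp only [map_zero] at h2
    exact hyne h2.symm
  · rintro ⟨B, hBle, hmem⟩
    by_contra hlt
    push_neg at hlt
    apply spectrum.notMem_iff.mpr ?_ hmem
    have key : algebraMap ℂ (H →L[ℂ] H) ξ - (A + (ε:ℂ) • B)
        = (algebraMap ℂ (H →L[ℂ] H) ξ - A) * (1 - R * ((ε:ℂ) • B)) := by
      rw [mul_sub, mul_one, ← mul_assoc, hmul, one_mul, sub_add_eq_sub_sub]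
    rw [key]
    apply hunit.mul
    have hnorm : ‖R * ((ε:ℂ) • B)‖ < 1 := by
      calc ‖R * ((ε:ℂ) • B)‖ ≤ ‖R‖ * ‖(ε:ℂ) • B‖ := norm_mul_le _ _
        _ ≤ ‖R‖ * ε := by
            apply mul_le_mul_of_nonneg_left _ (norm_nonneg _)
            rw [norm_smul, Complex.norm_real, Real.norm_eq_abs, abs_of_pos hε]
            exact mul_le_of_le_one_right hε.le hBle
        _ < (1/ε) * ε := mul_lt_mul_of_pos_right hlt hε
        _ = 1 := by field_simp
    exact (Units.oneSub _ hnorm).isUnit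
end
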